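/- Let X be a Tychonoff (completely regular Hausdorff) topological space with more than two points. Then the girth of the annihilating-ideal graph of C(X) is 3; in particular, there exist pairwise distinct ideals I, J, K ∈ A(X) with I·J = {0}, J·K = {0}, and I·K = {0}. -/

import Mathlib

open Set

/-- `annIdeal I` is `Ann(I)`, the annihilator of the ideal `I` of `C(X, ℝ)`. -/
def annIdeal {X : Type*} [TopologicalSpace X] (I : Ideal C(X, ℝ)) : Ideal C(X, ℝ) where
  carrier := {g | ∀ f ∈ I, g * f = 0}
  add_mem' := by
    intro a b ha hb f hf
    rw [add_mul, ha f hf, hb f hf, add_zero]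
  zero_mem' := fun f _ => zero_mul f
  smul_mem' := by
    intro c g hg f hf
    rw [smul_eq_mul, mul_assoc, hg f hf, mul_zero]

/-- `annSet X` is `A(X)`: the set of nonzero ideals of `C(X, ℝ)` with nonzero annihilator. -/
def annSet (X : Type*) [TopologicalSpace X] : Set (Ideal C(X, ℝ)) :=
  {I | I ≠ ⊥ ∧ annIdeal I ≠ ⊥}

/-- The annihilating-ideal graph of `C(X, ℝ)`: vertices are the ideals in `A(X)`, and two
distinct vertices `I`, `J` are adjacent exactly when `I·J = {0}`. -/
def annGraph (X : Type*) [TopologicalSpace X] : SimpleGraph (annSet X) where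
  Adj I J := I ≠ J ∧ (I : Ideal C(X, ℝ)) * (J : Ideal C(X, ℝ)) = ⊥
  symm := by
    constructor
    intro I J h
    exact ⟨h.1.symm, by rw [mul_comm]; exact h.2⟩
  loopless := ⟨fun I h => h.1 rfl⟩

/-- A bump function: `1` at a point, `0` outside a given open neighborhood. -/
lemma exists_bump {X : Type*} [TopologicalSpace X] [T35Space X] {x : X} {U : Set X}
    (hU : IsOpen U) (hx : x ∈ U) :
    ∃ f : C(X, ℝ), f x = 1 ∧ ∀ y, y ∉ U → f y = 0 := by
  obtain ⟨f, cf, hfx, hfK⟩ :=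
    CompletelyRegularSpace.completely_regular x Uᶜ hU.isClosed_compl (by simpa using hx)
  refine ⟨⟨fun y => 1 - (f y : ℝ), by continuity⟩, ?_, ?_⟩
  · simp [hfx]
  · intro y hy
    have : f y = 1 := hfK hy
    simp [this]

/-- If a Tychonoff space `X` has more than two points, then the girth of the
annihilating-ideal graph of `C(X)` is `3`; in particular there are pairwise distinct ideals
`I, J, K ∈ A(X)` with `I·J = J·K = I·K = {0}`. -/
theorem girth_eq_three {X : Type*} [TopologicalSpace X] [T35Space X]
    (h : ∃ a b c : X, a ≠ b ∧ a ≠ c ∧ b ≠ c) :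
    (annGraph X).girth = 3 ∧
      ∃ I J K : Ideal C(X, ℝ), I ∈ annSet X ∧ J ∈ annSet X ∧ K ∈ annSet X ∧
        I ≠ J ∧ J ≠ K ∧ I ≠ K ∧ I * J = ⊥ ∧ J * K = ⊥ ∧ I * K = ⊥ := by
  obtain ⟨a, b, c, hab, hac, hbc⟩ := h
  -- pairwise disjoint open neighborhoods
  obtain ⟨Uab, Vab, hUab, hVab, haUab, hbVab, hdab⟩ := t2_separation hab
  obtain ⟨Uac, Vac, hUac, hVac, haUac, hcVac, hdac⟩ := t2_separation hac
  obtain ⟨Ubc, Vbc, hUbc, hVbc, hbUbc, hcVbc, hdbc⟩ := t2_separation hbc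
  set Ua := Uab ∩ Uac with hUa
  set Ub := Vab ∩ Ubc with hUb
  set Uc := Vac ∩ Vbc with hUc
  obtain ⟨fa, hfa1, hfa0⟩ := exists_bump (hUab.inter hUac) ⟨haUab, haUac⟩
  obtain ⟨fb, hfb1, hfb0⟩ := exists_bump (hVab.inter hUbc) ⟨hbVab, hbUbc⟩
  obtain ⟨fc, hfc1, hfc0⟩ := exists_bump (hVac.inter hVbc) ⟨hcVac, hcVbc⟩
  -- products vanish
  have hprod : ∀ (f g : C(X, ℝ)) (U V : Set X), Disjoint U V →
      (∀ y, y ∉ U → f y = 0) → (∀ y, y ∉ V → g y = 0) → f * g = 0 := by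
    intro f g U V hd hf hg
    ext y
    by_cases hy : y ∈ U
    · have : y ∉ V := fun hyV => hd.ne_of_mem hy hyV rfl
      simp [hg y this]
    · simp [hf y hy]
  have dUaUb : Disjoint Ua Ub := hdab.mono inter_subset_left inter_subset_left
  have dUbUc : Disjoint Ub Uc := hdbc.mono inter_subset_right inter_subset_right
  have dUaUc : Disjoint Ua Uc := hdac.mono inter_subset_right inter_subset_left
  have hab0 : fa * fb = 0 := hprod fa fb Ua Ub dUaUb hfa0 hfb0
  have hbc0 : fb * fc = 0 := hprod fb fc Ub Uc dUbUc hfb0 hfc0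
  have hac0 : fa * fc = 0 := hprod fa fc Ua Uc dUaUc hfa0 hfc0
  have hfane : fa ≠ 0 := fun hh => by simpa [hh] using hfa1
  have hfbne : fb ≠ 0 := fun hh => by simpa [hh] using hfb1
  have hfcne : fc ≠ 0 := fun hh => by simpa [hh] using hfc1
  set I := Ideal.span {fa} with hI
  set J := Ideal.span {fb} with hJ
  set K := Ideal.span {fc} with hK
  have hIJ : I * J = ⊥ := by
    rw [hI, hJ, Ideal.span_singleton_mul_span_singleton, hab0, Ideal.span_singleton_eq_bot]
  have hJK : J * K = ⊥ := by
    rw [hJ, hK, Ideal.span_singleton_mul_span_singleton, hbc0, Ideal.span_singleton_eq_bot]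
  have hIK : I * K = ⊥ := by
    rw [hI, hK, Ideal.span_singleton_mul_span_singleton, hac0, Ideal.span_singleton_eq_bot]
  -- nonzero, nonzero annihilator
  have hspan_ne : ∀ f : C(X, ℝ), f ≠ 0 → Ideal.span {f} ≠ ⊥ := fun f hf =>
    fun hh => hf (Ideal.span_singleton_eq_bot.mp hh)
  have hann : ∀ f g : C(X, ℝ), f * g = 0 → f ∈ annIdeal (Ideal.span {g}) := by
    intro f g hfg p hp
    obtain ⟨q, rfl⟩ := Ideal.mem_span_singleton'.mp hp
    calc f * (q * g) = q * (f * g) := by ring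
    _ = 0 := by rw [hfg, mul_zero]
  have hmemann : ∀ f g : C(X, ℝ), f ≠ 0 → f * g = 0 →
      annIdeal (Ideal.span {g}) ≠ ⊥ := by
    intro f g hf hfg hh
    exact hf (by simpa [hh] using (hann f g hfg : f ∈ annIdeal (Ideal.span {g})))
  have hImem : I ∈ annSet X :=
    ⟨hspan_ne fa hfane, hmemann fb fa (by simpa using hfbne) (by rw [mul_comm]; exact hab0)⟩
  have hJmem : J ∈ annSet X :=
    ⟨hspan_ne fb hfbne, hmemann fa fb hfane hab0⟩
  have hKmem : K ∈ annSet X :=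
    ⟨hspan_ne fc hfcne, hmemann fa fc hfane hac0⟩
  -- distinctness
  have hsqne : ∀ f : C(X, ℝ), f ≠ 0 → f * f ≠ 0 := by
    intro f hf hh
    apply hf
    ext y
    have : f y * f y = 0 := congrFun (congrArg DFunLike.coe hh) y
    have := mul_self_eq_zero.mp this
    simpa using this
  have hne : ∀ f g : C(X, ℝ), f ≠ 0 → f * g = 0 →
      Ideal.span ({f} : Set C(X, ℝ)) ≠ Ideal.span {g} := by
    intro f g hf hfg hh
    have hfm : f ∈ Ideal.span ({g} : Set C(X, ℝ)) := hh ▸ Ideal.mem_span_singleton_self f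
    obtain ⟨q, hq⟩ := Ideal.mem_span_singleton'.mp hfm
    apply hsqne f hf
    calc f * f = f * (q * g) := by rw [hq]
    _ = q * (f * g) := by ring
    _ = 0 := by rw [hfg, mul_zero]
  have hIneJ : I ≠ J := hne fa fb hfane hab0
  have hJneK : J ≠ K := hne fb fc hfbne hbc0
  have hIneK : I ≠ K := hne fa fc hfane hac0
  refine ⟨?_, I, J, K, hImem, hJmem, hKmem, hIneJ, hJneK, hIneK, hIJ, hJK, hIK⟩
  -- girth computation
  set vI : annSet X := ⟨I, hImem⟩
  set vJ : annSet X := ⟨J, hJmem⟩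
  set vK : annSet X := ⟨K, hKmem⟩
  have hvIJ : vI ≠ vJ := fun hh => hIneJ (congrArg Subtype.val hh)
  have hvJK : vJ ≠ vK := fun hh => hJneK (congrArg Subtype.val hh)
  have hvIK : vI ≠ vK := fun hh => hIneK (congrArg Subtype.val hh)
  have aIJ : (annGraph X).Adj vI vJ := ⟨hvIJ, hIJ⟩
  have aJK : (annGraph X).Adj vJ vK := ⟨hvJK, hJK⟩
  have aKI : (annGraph X).Adj vK vI := ⟨hvIK.symm, by rw [mul_comm]; exact hIK⟩
  let w : (annGraph X).Walk vI vI :=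
    SimpleGraph.Walk.cons aIJ (SimpleGraph.Walk.cons aJK (SimpleGraph.Walk.cons aKI .nil))
  have hwcyc : w.IsCycle := by
    rw [SimpleGraph.Walk.cons_isCycle_iff]
    constructor
    · refine SimpleGraph.Walk.IsPath.cons ?_ ?_
      · exact (SimpleGraph.Walk.IsPath.nil).cons (by simpa using hvIK.symm)
      · simp [hvJK, hvIJ.symm]
    · simp only [SimpleGraph.Walk.edges_cons, SimpleGraph.Walk.edges_nil, List.mem_cons,
        List.not_mem_nil, or_false]
    
      rintro (hh | hh)
      · rw [Sym2.eq_iff] at hh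
        rcases hh with ⟨h1, h2⟩ | ⟨h1, h2⟩
        · exact hvJK h2
        · exact hvIK h1
      · rw [Sym2.eq_iff] at hh
        rcases hh with ⟨h1, h2⟩ | ⟨h1, h2⟩
        · exact hvIK h1
        · exact hvJK h2
  have hwlen : w.length = 3 := rfl
  have hnotacyc : ¬ (annGraph X).IsAcyclic := fun hh => hh w hwcyc
  have h3le : 3 ≤ (annGraph X).girth := SimpleGraph.three_le_girth hnotacyc
  have hle3 : (annGraph X).egirth ≤ 3 := by
    calc (annGraph X).egirth ≤ (w.length : ℕ∞) := by
          rw [SimpleGraph.egirth]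
          exact iInf_le_of_le vI (iInf_le_of_le w (iInf_le_of_le hwcyc le_rfl))
    _ = 3 := by rw [hwlen]; rfl
  have : (annGraph X).girth ≤ 3 := by
    have := ENat.toNat_le_toNat hle3 (by simp)
    simpa [SimpleGraph.girth] using this
  omega
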